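/- Let H be a connected simple graph on a 4-element vertex set. In the fully dynamic setting, the number of 4-subsets S of V such that G'[S] is isomorphic to H and G'[S] differs from G[S] equals the number of such 4-subsets S that are moreover contained in W; that is, all induced copies of H created by the fully dynamic batch (type-1 copies of G' touching changed edges and transitioned copies) are counted by counting within the local subgraph on W. -/
import Mathlib


open scoped Classical

theorem statement_10
    {V K : Type*} [Fintype V] [DecidableEq V] [Fintype K]
    (G A D G' : SimpleGraph V)
    (hdisj : ∀ u v : V, ¬ (G.Adj u v ∧ A.Adj u v))
    (hD : D ≤ G)
    (hG' : G' = (G \ D) ⊔ A)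
    (W : Set V)
    (hW : W = {x : V | ∃ u v : V, (A.Adj u v ∨ D.Adj u v) ∧
      ((∃ p : (G ⊔ A).Walk u x, p.length ≤ 3) ∨ (∃ p : (G ⊔ A).Walk v x, p.length ≤ 3))})
    (H : SimpleGraph K) (hK : Fintype.card K = 4) (hH : H.Connected) :
    (Finset.univ.filter fun S : Finset V =>
        S.card = 4 ∧ Nonempty ((G'.induce (S : Set V)) ≃g H) ∧ G'.induce (S : Set V) ≠ G.induce (S : Set V)).card
    = (Finset.univ.filter fun S : Finset V =>
        S.card = 4 ∧ Nonempty ((G'.induce (S : Set V)) ≃g H) ∧ G'.induce (S : Set V) ≠ G.induce (S : Set V) ∧ (S : Set V) ⊆ W).card := by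
  have hle : G' ≤ G ⊔ A := by
    rw [hG']
    exact sup_le_sup sdiff_le le_rfl
  have key : ∀ x y : V, G'.Adj x y ≠ G.Adj x y → A.Adj x y ∨ D.Adj x y := by
    intro x y hxy
    by_cases hg : G.Adj x y
    · by_cases hd : D.Adj x y
      · exact Or.inr hd
      · exact absurd (by rw [eq_iff_iff, hG']; simp [SimpleGraph.sup_adj,
          SimpleGraph.sdiff_adj, hg, hd]) hxy
    · by_cases ha : A.Adj x y
      · exact Or.inl ha
      · refine absurd ?_ hxy
        rw [eq_iff_iff, hG']
        simp [SimpleGraph.sup_adj, SimpleGraph.sdiff_adj, hg, ha]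
  congr 1
  apply Finset.filter_congr
  intro S _
  constructor
  · rintro ⟨hcard, ⟨e⟩, hne⟩
    refine ⟨hcard, ⟨e⟩, hne, ?_⟩
    have hdiff : ∃ a b : (S : Set V), (G'.induce (S : Set V)).Adj a b ≠ (G.induce (S : Set V)).Adj a b := by
      by_contra hc
      push_neg at hc
      exact hne (SimpleGraph.ext (by ext a b; exact eq_iff_iff.mp (hc a b)))
    obtain ⟨a, b, hab⟩ := hdiff
    simp only [SimpleGraph.comap_adj, Function.Embedding.coe_subtype] at hab
    have hADadj : A.Adj ↑a ↑b ∨ D.Adj ↑a ↑b := key _ _ hab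
    have hconn : (G'.induce (S : Set V)).Connected := by
      rw [SimpleGraph.connected_iff_exists_forall_reachable]
      have hKne : Nonempty K := Fintype.card_pos_iff.mp (by omega)
      obtain ⟨v⟩ : Nonempty (S : Set V) := hKne.map e.toEquiv.symm
      refine ⟨v, fun w => ?_⟩
      obtain ⟨p⟩ := hH.preconnected (e v) (e w)
      have hq := p.map e.symm.toHom
      exact ⟨hq.copy (by simp) (by simp)⟩
    intro x hx
    rw [hW]
    refine ⟨↑a, ↑b, hADadj, Or.inl ?_⟩
    obtain ⟨p⟩ := hconn a ⟨x, hx⟩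
    have hcardS : Fintype.card (S : Set V) = 4 := by
      simp only [Finset.coe_sort_coe, Fintype.card_coe]; exact hcard
    have hlen : p.toPath.1.length ≤ 3 := by
      have := p.toPath.2.length_lt
      omega
    let f : G'.induce (S : Set V) →g (G ⊔ A) :=
      ⟨Subtype.val, fun h => hle h⟩
    refine ⟨p.toPath.1.map f, ?_⟩
    rwa [SimpleGraph.Walk.length_map]
  · rintro ⟨hcard, h2, h3, _⟩
    exact ⟨hcard, h2, h3⟩
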